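/- Let g¹ and g² be finite sequences of nonnegative integers, let λ be a partition whose GJW sequence is the concatenation g¹ ++ (1) ++ g², and let λ′ be the partition whose GJW sequence is g¹ ++ (1, 0) ++ g². Then the rook posets P_λ and P_{λ′} are isomorphic as partially ordered sets. -/

import Mathlib

namespace RookPoset

/-- A partition with `n` parts: `part i` is the (1-based) part `λ_{i+1}`.
The parts are weakly increasing and contain the staircase (`λ_i ≥ i`, 1-based),
which in particular makes them positive. -/
structure Partition (n : ℕ) where
  part : Fin n → ℕ
  mono : Monotone part
  staircase : ∀ i : Fin n, (i : ℕ) + 1 ≤ part i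

/-- The largest part; equals `λ_n` when `n > 0`. -/
def Partition.maxPart {n : ℕ} (lam : Partition n) : ℕ :=
  Finset.univ.sup lam.part

/-- The part `λ_k` in 1-based indexing, with the convention `λ_m = n + 1` for `m > n`. -/
def Partition.partAt {n : ℕ} (lam : Partition n) (k : ℕ) : ℕ :=
  if h : 1 ≤ k ∧ k ≤ n then lam.part ⟨k - 1, by omega⟩ else n + 1

/-- The GJW sequence `(λ_1 - 1, λ_2 - 2, …, λ_n - n)` of a partition. -/
def Partition.gjw {n : ℕ} (lam : Partition n) : List ℕ :=
  (List.finRange n).map fun i => lam.part i - ((i : ℕ) + 1)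

/-- A maximal rook placement on the Ferrers board of `lam`: `col i` is the (1-based)
column of the rook in the (1-based) row `i + 1` (rows indexed bottom-up). -/
structure Placement {n : ℕ} (lam : Partition n) where
  col : Fin n → ℕ
  inj : Function.Injective col
  pos : ∀ i, 1 ≤ col i
  le_part : ∀ i, col i ≤ lam.part i

/-- The increasingly sorted list of the values `x i` over indices `i` with `(i : ℕ) < j`,
i.e. the sorted initial segment `{x_1, …, x_j}` (1-based). -/
def initSeg {n : ℕ} (x : Fin n → ℕ) (j : ℕ) : List ℕ :=
  ((Finset.univ.filter fun i : Fin n => (i : ℕ) < j).image x).sort (· ≤ ·)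

/-- The rook poset order: `x ≤ y` iff each sorted initial segment of `x` is
componentwise at most the corresponding sorted initial segment of `y`. -/
def rle {n : ℕ} {lam : Partition n} (x y : Placement lam) : Prop :=
  ∀ j : ℕ, List.Forall₂ (· ≤ ·) (initSeg x.col j) (initSeg y.col j)

/-- `y` covers `x` in the rook poset. -/
def rcovers {n : ℕ} {lam : Partition n} (x y : Placement lam) : Prop :=
  rle x y ∧ x ≠ y ∧ ∀ z : Placement lam, rle x z → rle z y → z = x ∨ z = y

/-- `y` covers `x` in the subposet induced on `S`. -/
def rcoversIn {n : ℕ} {lam : Partition n} (S : Set (Placement lam)) (x y : Placement lam) :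
    Prop :=
  x ∈ S ∧ y ∈ S ∧ rle x y ∧ x ≠ y ∧ ∀ z ∈ S, rle x z → rle z y → z = x ∨ z = y

/-- `t` is the greedy placement `1̂`: for each row in turn (bottom-up), the rook is placed
in the largest column `≤ λ_i` not used by a lower row. -/
def IsGreedy {n : ℕ} {lam : Partition n} (t : Placement lam) : Prop :=
  ∀ i : Fin n, ∀ m : ℕ, 1 ≤ m → m ≤ lam.part i →
    (∀ k : Fin n, k < i → t.col k ≠ m) → m ≤ t.col i

/-- `x` is obtained from `y` by the switch move on the rooks in rows `i < k`:
the rectangle spanned by the rooks at `(i, y.col i)` and `(k, y.col k)` contains no other rook,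
and the two rooks exchange columns. -/
def SwitchMove {n : ℕ} {lam : Partition n} (y x : Placement lam) (i k : Fin n) : Prop :=
  i < k ∧ y.col k < y.col i ∧
  (∀ r : Fin n, i ≤ r → r ≤ k → y.col k ≤ y.col r → y.col r ≤ y.col i → r = i ∨ r = k) ∧
  x.col i = y.col k ∧ x.col k = y.col i ∧
  ∀ r : Fin n, r ≠ i → r ≠ k → x.col r = y.col r

/-- `x` is obtained from `y` by a push move on the rook in row `i`: the rook moves to an
empty column `c` to its left such that every column strictly between `c` and its old column
contains a rook in a row below row `i`. -/
def PushMove {n : ℕ} {lam : Partition n} (y x : Placement lam) (i : Fin n) : Prop :=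
  ∃ c : ℕ, 1 ≤ c ∧ c < y.col i ∧ (∀ r : Fin n, y.col r ≠ c) ∧
    (∀ d : ℕ, c < d → d < y.col i → ∃ r : Fin n, r < i ∧ y.col r = d) ∧
    x.col i = c ∧ ∀ r : Fin n, r ≠ i → x.col r = y.col r

/-- `x` is obtained from `y` by a single switch or push move on the rook in row `i`. -/
def MoveOnRow {n : ℕ} {lam : Partition n} (y x : Placement lam) (i : Fin n) : Prop :=
  (∃ k : Fin n, SwitchMove y x i k) ∨ PushMove y x i

/-- Two coatoms `c, c'` of the rook poset (with top element `t`) are entangled: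
there are two distinct elements each of which is covered by both `c` and `c'`
and lies below no other coatom. -/
def Entangled {n : ℕ} {lam : Partition n} (t c c' : Placement lam) : Prop :=
  ∃ z₁ z₂ : Placement lam, z₁ ≠ z₂ ∧
    (rcovers z₁ c ∧ rcovers z₁ c' ∧
      ∀ d : Placement lam, rcovers d t → d ≠ c → d ≠ c' → ¬ rle z₁ d) ∧
    (rcovers z₂ c ∧ rcovers z₂ c' ∧
      ∀ d : Placement lam, rcovers d t → d ≠ c → d ≠ c' → ¬ rle z₂ d)

/-- `X_I`: the set of elements of the rook poset lying below no coatom outside `I`. -/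
def Xset {n : ℕ} {lam : Partition n} (t : Placement lam) (I : Set (Placement lam)) :
    Set (Placement lam) :=
  {z : Placement lam | ∀ c' : Placement lam, rcovers c' t → c' ∉ I → ¬ rle z c'}

/-- The completed permutation `σ_x` of `{1, …, λ_n}` (as a function on 1-based positions):
position `i ≤ n` holds `x_i`, and the remaining positions hold the unused values in
increasing order (i.e. each subsequent position receives the smallest value not yet used). -/
def Placement.sigma {n : ℕ} {lam : Partition n} (x : Placement lam) : ℕ → ℕ := fun a =>
  if h : 1 ≤ a ∧ a ≤ n then x.col ⟨a - 1, by omega⟩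
  else ((Finset.Icc 1 lam.maxPart \ Finset.univ.image x.col).sort (· ≤ ·)).getD (a - n - 1) 0

/-- The rank `r(x)`: the number of inversions of the completed permutation `σ_x`. -/
def Placement.rank {n : ℕ} {lam : Partition n} (x : Placement lam) : ℕ :=
  ((Finset.Icc 1 lam.maxPart ×ˢ Finset.Icc 1 lam.maxPart).filter
    fun p => p.1 < p.2 ∧ x.sigma p.2 < x.sigma p.1).card

/-- Break a list after every entry equal to `1`. -/
def breakAfterOnes : List ℕ → List (List ℕ)
  | [] => []
  | a :: rest =>
    if a = 1 then [a] :: breakAfterOnes rest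
    else
      match breakAfterOnes rest with
      | [] => [[a]]
      | b :: bs => (a :: b) :: bs

/-- The multiset of blocks of a partition: break the GJW sequence after every entry
equal to `1` and delete all entries equal to `0` (discarding empty blocks). -/
def Partition.blocks {n : ℕ} (lam : Partition n) : Multiset (List ℕ) :=
  (((breakAfterOnes lam.gjw).map fun b => b.filter (· ≠ 0)).filter
    (· ≠ ([] : List ℕ)) : List (List ℕ))

/-- The conjugate of a block `b = (g_1, …, g_k)` ending in `1`: it is the GJW sequence of the
conjugate partition `ν'` of the partition `ν` with `ν_i = g_i + i`, where
`ν'_i = k + 2 - min {m | ν_m ≥ k + 2 - i}` with the convention `ν_{k+1} = k + 1`. -/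
noncomputable def conjBlock (b : List ℕ) : List ℕ :=
  let k := b.length
  let nu : ℕ → ℕ := fun m => if m ≤ k then b.getD (m - 1) 0 + m else k + 1
  (List.range k).map fun i0 =>
    let i := i0 + 1
    (k + 2 - sInf {m : ℕ | 1 ≤ m ∧ k + 2 - i ≤ nu m}) - i

/-- A block ends in `1`. -/
def endsInOne (b : List ℕ) : Prop := b.getLast? = some 1

/-- Two blocks are equivalent when they are equal, or one ends in `1` and the other is its
conjugate block. -/
def BlockEquiv (b b' : List ℕ) : Prop :=
  b = b' ∨ (endsInOne b ∧ b' = conjBlock b) ∨ (endsInOne b' ∧ b = conjBlock b')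

/-- Two partitions have matching block data: their multisets of blocks become equal after
replacing some blocks ending in `1` by their conjugate blocks. -/
def MatchingBlocks {n m : ℕ} (lam : Partition n) (mu : Partition m) : Prop :=
  Multiset.Rel BlockEquiv lam.blocks mu.blocks

/-- The rook posets of `lam` and `mu` are isomorphic as partially ordered sets. -/
def RookIso {n m : ℕ} (lam : Partition n) (mu : Partition m) : Prop :=
  ∃ e : Placement lam ≃ Placement mu, ∀ a b : Placement lam, rle a b ↔ rle (e a) (e b)

/-- A function `τ`, viewed as a permutation of `{1, …, N}`, is `312`-avoiding. -/
def Avoids312 (N : ℕ) (τ : ℕ → ℕ) : Prop :=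
  ∀ a b c : ℕ, 1 ≤ a → a < b → b < c → c ≤ N → ¬ (τ b < τ c ∧ τ c < τ a)

/-- A permutation of `Fin N` is `312`-avoiding. -/
def Avoids312P {N : ℕ} (τ : Equiv.Perm (Fin N)) : Prop :=
  ∀ a b c : Fin N, a < b → b < c → ¬ (τ b < τ c ∧ τ c < τ a)

/-- The Bruhat order on permutations, characterized by componentwise dominance of the
increasingly sorted initial segments. -/
def bruhatLE {N : ℕ} (σ τ : Equiv.Perm (Fin N)) : Prop :=
  ∀ j : ℕ, List.Forall₂ (· ≤ ·)
    (initSeg (fun a : Fin N => (σ a : ℕ)) j) (initSeg (fun a : Fin N => (τ a : ℕ)) j)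


/-! ### Auxiliary development for the proof -/


/-- Extend `f : Fin n → ℕ` by zero. -/
def ecol {n : ℕ} (f : Fin n → ℕ) : ℕ → ℕ := fun i => if h : i < n then f ⟨i, h⟩ else 0

def cntN (E : ℕ → ℕ) (j t : ℕ) : ℕ :=
  ((Finset.range j).filter fun i => 1 ≤ E i ∧ E i ≤ t).card

def cntD (p : ℕ) (E : ℕ → ℕ) (j t : ℕ) : ℕ :=
  ((Finset.Ico (p + 1) j).filter fun i => 1 ≤ E i ∧ E i ≤ t).card

def fmap (p v : ℕ) : ℕ := if v = 0 then 0 else if v ≤ p + 2 then p + 3 else v + 1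

lemma forall2_le_count {a b : List ℕ} (hab : List.Forall₂ (· ≤ ·) a b) (t : ℕ) :
    b.countP (fun v => decide (v ≤ t)) ≤ a.countP (fun v => decide (v ≤ t)) := by
  induction hab with
  | nil => simp
  | cons h₁ h₂ ih =>
    simp only [List.countP_cons, decide_eq_true_eq]
    split_ifs <;> omega

lemma forall2_le_iff_countP {a b : List ℕ} (ha : a.Pairwise (· ≤ ·)) (hb : b.Pairwise (· ≤ ·))
    (hlen : a.length = b.length) :
    List.Forall₂ (· ≤ ·) a b ↔
      ∀ t, b.countP (fun v => decide (v ≤ t)) ≤ a.countP (fun v => decide (v ≤ t)) := by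
  constructor
  · exact fun h t => forall2_le_count h t
  · induction a generalizing b with
    | nil =>
      cases b with
      | nil => intro _; exact List.Forall₂.nil
      | cons b0 b' => simp at hlen
    | cons a0 a' ih =>
      cases b with
      | nil => simp at hlen
      | cons b0 b' =>
        intro hcnt
        rw [List.pairwise_cons] at ha hb
        have hhead : a0 ≤ b0 := by
          have h1 : 1 ≤ (b0 :: b').countP (fun v => decide (v ≤ b0)) := by
            simp [List.countP_cons]
          have h2 := (h1.trans (hcnt b0))
          have h3 : ∃ v ∈ a0 :: a', v ≤ b0 := by
            have := List.countP_pos_iff (p := fun v => decide (v ≤ b0)) (l := a0 :: a') |>.mp (by omega)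
            simpa using this
          obtain ⟨v, hv, hvb⟩ := h3
          rcases List.mem_cons.mp hv with rfl | hv'
          · exact hvb
          · exact (ha.1 v hv').trans hvb
        refine List.Forall₂.cons hhead (ih ha.2 hb.2 (by simpa using hlen) ?_)
        intro t
        have hct := hcnt t
        simp only [List.countP_cons, decide_eq_true_eq] at hct
        by_cases hat : a0 ≤ t
        · by_cases hbt : b0 ≤ t
          · simp [hat, hbt] at hct; omega
          · have : b'.countP (fun v => decide (v ≤ t)) = 0 := by
              rw [List.countP_eq_zero]
              intro v hv
              simp only [decide_eq_true_eq]
              have := hb.1 v hv; omega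
            omega
        · have hz : a'.countP (fun v => decide (v ≤ t)) = 0 := by
            rw [List.countP_eq_zero]
            intro v hv
            simp only [decide_eq_true_eq]
            have := ha.1 v hv; omega
          have hzb : b'.countP (fun v => decide (v ≤ t)) = 0 := by
            rw [List.countP_eq_zero]
            intro v hv
            simp only [decide_eq_true_eq]
            have := hb.1 v hv
            omega
          omega

lemma card_filter_univ_fin (n : ℕ) (P : ℕ → Prop) [DecidablePred P] :
    (Finset.univ.filter fun i : Fin n => P i.val).card = ((Finset.range n).filter P).card := by
  rw [Finset.card_filter, Finset.card_filter, Fin.sum_univ_eq_sum_range (fun i => if P i then 1 else 0)]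

lemma countP_initSeg {n : ℕ} (f : Fin n → ℕ) (hinj : Function.Injective f)
    (hpos : ∀ i, 1 ≤ f i) (j t : ℕ) :
    (initSeg f j).countP (fun v => decide (v ≤ t)) = cntN (ecol f) j t := by
  rw [initSeg]
  have h1 : ∀ S : Finset ℕ, ((S.sort (· ≤ ·)).countP (fun v => decide (v ≤ t)))
      = (S.filter (fun v => v ≤ t)).card := by
    intro S
    have h2 := Multiset.coe_countP (p := fun v => v ≤ t) (S.sort (· ≤ ·))
    rw [← h2, Finset.sort_eq, Multiset.countP_eq_card_filter]
    rfl
  rw [h1, Finset.filter_image, Finset.filter_filter,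
    Finset.card_image_of_injective _ hinj]
  have e1 : (Finset.filter (fun a : Fin n => ↑a < j ∧ f a ≤ t) Finset.univ)
      = (Finset.filter (fun a : Fin n => (↑a < j ∧ ecol f ↑a ≤ t)) Finset.univ) := by
    apply Finset.filter_congr; intro a _
    simp [ecol, a.isLt]
  rw [e1, card_filter_univ_fin n (fun i => i < j ∧ ecol f i ≤ t), cntN]
  congr 1
  ext i
  simp only [Finset.mem_filter, Finset.mem_range]
  by_cases hi : i < n
  · have h2 : 1 ≤ ecol f i := by simpa [ecol, hi] using hpos ⟨i, hi⟩
    omega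
  · have h2 : ecol f i = 0 := by simp [ecol, hi]
    omega


lemma length_initSeg {n : ℕ} (f : Fin n → ℕ) (hinj : Function.Injective f) (j : ℕ) :
    (initSeg f j).length = ((Finset.univ.filter fun i : Fin n => (i : ℕ) < j)).card := by
  rw [initSeg, Finset.length_sort, Finset.card_image_of_injective _ hinj]

lemma rle_iff_cnt {n : ℕ} {lam : Partition n} (x y : Placement lam) :
    rle x y ↔ ∀ j t, cntN (ecol y.col) j t ≤ cntN (ecol x.col) j t := by
  constructor
  · intro H j t
    rw [← countP_initSeg x.col x.inj x.pos, ← countP_initSeg y.col y.inj y.pos]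
    exact forall2_le_count (H j) t
  · intro H j
    apply (forall2_le_iff_countP (Finset.pairwise_sort _ _) (Finset.pairwise_sort _ _)
      ((length_initSeg x.col x.inj j).trans (length_initSeg y.col y.inj j).symm)).mpr
    intro t
    have hx := countP_initSeg x.col x.inj x.pos j t
    have hy := countP_initSeg y.col y.inj y.pos j t
    rw [initSeg] at hx hy
    exact hy.le.trans ((H j t).trans hx.ge)

lemma cntN_split (E : ℕ → ℕ) (a j t : ℕ) (h : a ≤ j) :
    cntN E j t = cntN E a t + ((Finset.Ico a j).filter fun i => 1 ≤ E i ∧ E i ≤ t).card := by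
  rw [cntN, cntN, Finset.range_eq_Ico,
    ← Finset.Ico_union_Ico_eq_Ico (Nat.zero_le a) h, Finset.filter_union,
    Finset.card_union_of_disjoint]
  · rw [Finset.range_eq_Ico]
  exact Finset.disjoint_filter_filter (Finset.Ico_disjoint_Ico_consecutive 0 a j)

lemma cntN_congr {E E' : ℕ → ℕ} (j t : ℕ) (h : ∀ i < j, E' i = E i) :
    cntN E' j t = cntN E j t := by
  rw [cntN, cntN]
  congr 1
  apply Finset.filter_congr
  intro i hi
  rw [h i (Finset.mem_range.mp hi)]

lemma card_Ico_shift (a b : ℕ) (P : ℕ → Prop) [DecidablePred P] :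
    ((Finset.Ico (a + 1) (b + 1)).filter P).card
      = ((Finset.Ico a b).filter fun i => P (i + 1)).card := by
  have h : Finset.Ico (a + 1) (b + 1) = (Finset.Ico a b).image (· + 1) := by
    ext i
    simp only [Finset.mem_Ico, Finset.mem_image]
    constructor
    · intro hi; exact ⟨i - 1, by omega, by omega⟩
    · rintro ⟨k, hk, rfl⟩; omega
  rw [h, Finset.filter_image, Finset.card_image_of_injective _ (add_left_injective 1)]

section KeyLemma

variable (p : ℕ)

lemma cntD_fmap_eq (E E' : ℕ → ℕ) (hE' : ∀ i, p + 1 ≤ i → E' (i + 1) = fmap p (E i))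
    (j t : ℕ) :
    ((Finset.Ico (p + 2) (j + 1)).filter fun i => 1 ≤ E' i ∧ E' i ≤ t).card
      = if p + 3 ≤ t then cntD p E j (t - 1) else 0 := by
  rw [show p + 2 = (p + 1) + 1 from rfl, card_Ico_shift]
  by_cases ht : p + 3 ≤ t
  · rw [if_pos ht, cntD]
    congr 1
    apply Finset.filter_congr
    intro i hi
    have hip : p + 1 ≤ i := (Finset.mem_Ico.mp hi).1
    rw [hE' i hip, fmap]
    split_ifs <;> omega
  · rw [if_neg ht, Finset.card_eq_zero, Finset.filter_eq_empty_iff]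
    intro i hi
    have hip : p + 1 ≤ i := (Finset.mem_Ico.mp hi).1
    rw [hE' i hip, fmap]
    split_ifs <;> omega

lemma cntD_small (E : ℕ → ℕ) (c : ℕ) (h2 : ∀ i, p + 1 ≤ i → 1 ≤ E i → E i ≤ p + 2 → E i = c)
    (j t : ℕ) (ht : t ≤ p + 2) :
    cntD p E j t = if c ≤ t then cntD p E j (p + 2) else 0 := by
  by_cases hct : c ≤ t
  · rw [if_pos hct, cntD, cntD]
    congr 1
    apply Finset.filter_congr
    intro i hi
    have hip := (Finset.mem_Ico.mp hi).1
    constructor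
    · rintro ⟨h1, hle⟩; exact ⟨h1, by omega⟩
    · rintro ⟨h1, hle⟩
      have := h2 i hip h1 hle
      exact ⟨h1, by omega⟩
  · rw [if_neg hct, cntD, Finset.card_eq_zero, Finset.filter_eq_empty_iff]
    intro i hi
    rintro ⟨h1, hle⟩
    have := h2 i (Finset.mem_Ico.mp hi).1 h1 (by omega)
    omega

lemma primed_formula (E E' : ℕ → ℕ) (c : ℕ) (hc1 : 1 ≤ c)
    (hK : ∀ t, cntN E (p + 1) t + (if c ≤ t then 1 else 0) = min t (p + 2))
    (hlo : ∀ i, i ≤ p → E' i = E i) (hmid : E' (p + 1) = c)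
    (hhi : ∀ i, p + 1 ≤ i → E' (i + 1) = fmap p (E i))
    (j t : ℕ) (hj : p + 1 ≤ j) :
    cntN E' (j + 1) t = min t (p + 2) + (if p + 3 ≤ t then cntD p E j (t - 1) else 0) := by
  rw [cntN_split E' (p + 2) (j + 1) t (by omega), cntD_fmap_eq p E E' hhi j t]
  congr 1
  rw [cntN_split E' (p + 1) (p + 2) t (by omega),
    cntN_congr (p + 1) t (fun i hi => hlo i (by omega)),
    show p + 2 = (p + 1) + 1 from rfl, Nat.Ico_succ_singleton,
    Finset.filter_singleton, hmid]
  have hKt := hK t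
  by_cases hct : c ≤ t
  · rw [if_pos (show 1 ≤ c ∧ c ≤ t from ⟨hc1, hct⟩), Finset.card_singleton]
    rw [if_pos hct] at hKt
    omega
  · rw [if_neg (show ¬(1 ≤ c ∧ c ≤ t) from fun hh => hct hh.2), Finset.card_empty]
    rw [if_neg hct] at hKt
    omega

lemma unprimed_formula (E : ℕ → ℕ) (c : ℕ)
    (hK : ∀ t, cntN E (p + 1) t + (if c ≤ t then 1 else 0) = min t (p + 2))
    (j t : ℕ) (hj : p + 1 ≤ j) :
    cntN E j t + (if c ≤ t then 1 else 0) = min t (p + 2) + cntD p E j t := by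
  rw [cntN_split E (p + 1) j t hj, cntD]
  have := hK t
  omega

lemma key_iff (c d : ℕ) (Ex Ey Ex' Ey' : ℕ → ℕ)
    (hc1 : 1 ≤ c) (hc2 : c ≤ p + 2) (hd1 : 1 ≤ d) (hd2 : d ≤ p + 2)
    (hKx : ∀ t, cntN Ex (p + 1) t + (if c ≤ t then 1 else 0) = min t (p + 2))
    (hKy : ∀ t, cntN Ey (p + 1) t + (if d ≤ t then 1 else 0) = min t (p + 2))
    (hx2 : ∀ i, p + 1 ≤ i → 1 ≤ Ex i → Ex i ≤ p + 2 → Ex i = c)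
    (hy2 : ∀ i, p + 1 ≤ i → 1 ≤ Ey i → Ey i ≤ p + 2 → Ey i = d)
    (hyB : ∀ j, cntD p Ey j (p + 2) ≤ 1)
    (hx'lo : ∀ i, i ≤ p → Ex' i = Ex i) (hx'mid : Ex' (p + 1) = c)
    (hx'hi : ∀ i, p + 1 ≤ i → Ex' (i + 1) = fmap p (Ex i))
    (hy'lo : ∀ i, i ≤ p → Ey' i = Ey i) (hy'mid : Ey' (p + 1) = d)
    (hy'hi : ∀ i, p + 1 ≤ i → Ey' (i + 1) = fmap p (Ey i)) :
    (∀ j t, cntN Ey j t ≤ cntN Ex j t) ↔ (∀ j t, cntN Ey' j t ≤ cntN Ex' j t) := by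
  constructor
  · intro H j t
    by_cases hj : j ≤ p + 1
    · rw [cntN_congr j t (fun i hi => hy'lo i (by omega)),
        cntN_congr j t (fun i hi => hx'lo i (by omega))]
      exact H j t
    · obtain ⟨j0, rfl⟩ : ∃ j0, j = j0 + 1 := ⟨j - 1, by omega⟩
      have hj0 : p + 1 ≤ j0 := by omega
      rw [primed_formula p Ex Ex' c hc1 hKx hx'lo hx'mid hx'hi j0 t hj0,
        primed_formula p Ey Ey' d hd1 hKy hy'lo hy'mid hy'hi j0 t hj0]
      by_cases ht : p + 3 ≤ t
      · rw [if_pos ht, if_pos ht]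
        have h1 := H j0 (t - 1)
        have h2 := unprimed_formula p Ex c hKx j0 (t - 1) hj0
        have h3 := unprimed_formula p Ey d hKy j0 (t - 1) hj0
        rw [if_pos (show c ≤ t - 1 by omega)] at h2
        rw [if_pos (show d ≤ t - 1 by omega)] at h3
        omega
      · rw [if_neg ht, if_neg ht]
  · intro H j t
    by_cases hj : j ≤ p + 1
    · have H1 := H j t
      rw [cntN_congr j t (fun i hi => hy'lo i (by omega)),
        cntN_congr j t (fun i hi => hx'lo i (by omega))] at H1
      exact H1
    · have hjp : p + 1 ≤ j := by omega
      have hdc : d ≤ c := by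
        have H1 := H (p + 1) c
        rw [cntN_congr (p + 1) c (fun i hi => hy'lo i (by omega)),
          cntN_congr (p + 1) c (fun i hi => hx'lo i (by omega))] at H1
        have h1 := hKx c
        have h2 := hKy c
        rw [if_pos le_rfl] at h1
        by_contra hcd
        rw [if_neg (fun hh => hcd hh)] at h2
        omega
      have hB : cntD p Ey j (p + 2) ≤ cntD p Ex j (p + 2) := by
        have H1 := H (j + 1) (p + 3)
        rw [primed_formula p Ex Ex' c hc1 hKx hx'lo hx'mid hx'hi j (p + 3) hjp,
          primed_formula p Ey Ey' d hd1 hKy hy'lo hy'mid hy'hi j (p + 3) hjp,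
          if_pos le_rfl, if_pos le_rfl, show p + 3 - 1 = p + 2 from rfl] at H1
        omega
      have hux := unprimed_formula p Ex c hKx j t hjp
      have huy := unprimed_formula p Ey d hKy j t hjp
      by_cases ht : p + 2 ≤ t
      · have hD : cntD p Ey j t ≤ cntD p Ex j t := by
          have H1 := H (j + 1) (t + 1)
          rw [primed_formula p Ex Ex' c hc1 hKx hx'lo hx'mid hx'hi j (t + 1) hjp,
            primed_formula p Ey Ey' d hd1 hKy hy'lo hy'mid hy'hi j (t + 1) hjp,
            if_pos (show p + 3 ≤ t + 1 by omega), if_pos (show p + 3 ≤ t + 1 by omega),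
            show t + 1 - 1 = t from rfl] at H1
          omega
        rw [if_pos (show c ≤ t by omega)] at hux
        rw [if_pos (show d ≤ t by omega)] at huy
        omega
      · have hsx := cntD_small p Ex c hx2 j t (by omega)
        have hsy := cntD_small p Ey d hy2 j t (by omega)
        have hyb := hyB j
        by_cases h1 : c ≤ t <;> by_cases h2 : d ≤ t <;>
          simp only [h1, h2, if_true, if_false, if_pos, if_neg, not_false_iff] at hux huy hsx hsy <;>
          omega

end KeyLemma

/-! ### partition and placement helpers -/

def epart {m : ℕ} (lam : Partition m) : ℕ → ℕ := fun i => if h : i < m then lam.part ⟨i, h⟩ else 0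

lemma epart_val {m : ℕ} (lam : Partition m) (j : Fin m) : epart lam j.val = lam.part j := by
  rw [epart, dif_pos j.isLt]

lemma epart_staircase {m : ℕ} (lam : Partition m) {i : ℕ} (h : i < m) : i + 1 ≤ epart lam i := by
  rw [epart, dif_pos h]
  exact lam.staircase ⟨i, h⟩

lemma ecol_lt {m : ℕ} {lam : Partition m} (x : Placement lam) {i : ℕ} (h : i < m) :
    ecol x.col i = x.col ⟨i, h⟩ := dif_pos h

lemma ecol_ge {m : ℕ} {lam : Partition m} (x : Placement lam) {i : ℕ} (h : ¬ i < m) :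
    ecol x.col i = 0 := dif_neg h

lemma ecol_pos {m : ℕ} {lam : Partition m} (x : Placement lam) {i : ℕ} (h : i < m) :
    1 ≤ ecol x.col i := by rw [ecol_lt x h]; exact x.pos _

lemma ecol_pos_lt {m : ℕ} {lam : Partition m} (x : Placement lam) {i : ℕ}
    (h : 1 ≤ ecol x.col i) : i < m := by
  by_contra hc
  rw [ecol_ge x hc] at h
  omega

lemma ecol_le_epart {m : ℕ} {lam : Partition m} (x : Placement lam) {i : ℕ} (h : i < m) :
    ecol x.col i ≤ epart lam i := by
  rw [ecol_lt x h, epart, dif_pos h]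
  exact x.le_part _

lemma ecol_injective {m : ℕ} {lam : Partition m} (x : Placement lam) {i i' : ℕ}
    (h1 : 1 ≤ ecol x.col i) (he : ecol x.col i = ecol x.col i') : i = i' := by
  have hi : i < m := ecol_pos_lt x h1
  have hi' : i' < m := ecol_pos_lt x (he ▸ h1)
  rw [ecol_lt x hi, ecol_lt x hi'] at he
  have := x.inj he
  exact congrArg Fin.val this

lemma Placement.ext_col {m : ℕ} {lam : Partition m} {x y : Placement lam} (h : x.col = y.col) :
    x = y := by
  cases x; cases y; cases h; rfl

section Maps

variable (p : ℕ) {n : ℕ} {lam : Partition n} {lam' : Partition (n + 1)}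

def lowSet (x : Placement lam) : Finset ℕ := (Finset.range (p + 1)).image (ecol x.col)

def cmiss (x : Placement lam) : ℕ := ((Finset.Icc 1 (p + 2)) \ lowSet p x).sum id

def fwdCol (x : Placement lam) : ℕ → ℕ := fun i =>
  if i ≤ p then ecol x.col i
  else if i = p + 1 then cmiss p x
  else fmap p (ecol x.col (i - 1))

def bwdCol (y : Placement lam') : ℕ → ℕ := fun i =>
  if i ≤ p then ecol y.col i
  else if ecol y.col (i + 1) = p + 3 then ecol y.col (p + 1)
  else ecol y.col (i + 1) - 1

variable (hpn : p + 1 ≤ n)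
  (h2 : ∀ i, i ≤ p → epart lam i ≤ p + 2)
  (h3 : ∀ i, i ≤ p → epart lam' i = epart lam i)
  (h4 : epart lam' (p + 1) = p + 2)
  (h45 : ∀ i, i ≤ p + 1 → epart lam' i ≤ p + 2)
  (h5 : ∀ i, p + 1 ≤ i → i < n → epart lam' (i + 1) = epart lam i + 1)

lemma ecol_mem_lowSet (x : Placement lam) {i : ℕ} (hi : i ≤ p) :
    ecol x.col i ∈ lowSet p x :=
  Finset.mem_image_of_mem _ (Finset.mem_range.mpr (by omega))

include hpn h2 in
lemma lowSet_subset (x : Placement lam) : lowSet p x ⊆ Finset.Icc 1 (p + 2) := by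
  intro v hv
  obtain ⟨i, hi, rfl⟩ := Finset.mem_image.mp hv
  have hip : i ≤ p := by have := Finset.mem_range.mp hi; omega
  have hin : i < n := by omega
  rw [Finset.mem_Icc]
  exact ⟨ecol_pos x hin, (ecol_le_epart x hin).trans (h2 i hip)⟩

include hpn in
lemma lowSet_card (x : Placement lam) : (lowSet p x).card = p + 1 := by
  rw [lowSet, Finset.card_image_of_injOn, Finset.card_range]
  intro i hi i' hi' he
  exact ecol_injective x (ecol_pos x (by have := Finset.mem_range.mp hi; omega)) he

include hpn h2 in
lemma cmiss_spec (x : Placement lam) :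
    (Finset.Icc 1 (p + 2)) \ lowSet p x = {cmiss p x} := by
  have hcard : ((Finset.Icc 1 (p + 2)) \ lowSet p x).card = 1 := by
    rw [Finset.card_sdiff_of_subset (lowSet_subset p hpn h2 x), lowSet_card p hpn x, Nat.card_Icc]
    omega
  obtain ⟨a, ha⟩ := Finset.card_eq_one.mp hcard
  have hca : cmiss p x = a := by
    rw [cmiss, ha, Finset.sum_singleton]
    rfl
  rw [hca, ha]

include hpn h2 in
lemma cmiss_mem (x : Placement lam) :
    cmiss p x ∈ Finset.Icc 1 (p + 2) ∧ cmiss p x ∉ lowSet p x := by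
  have := cmiss_spec p hpn h2 x
  have hm : cmiss p x ∈ (Finset.Icc 1 (p + 2)) \ lowSet p x := by
    rw [this]; exact Finset.mem_singleton_self _
  exact Finset.mem_sdiff.mp hm

include hpn h2 in
lemma cmiss_pos (x : Placement lam) : 1 ≤ cmiss p x :=
  (Finset.mem_Icc.mp (cmiss_mem p hpn h2 x).1).1

include hpn h2 in
lemma cmiss_le (x : Placement lam) : cmiss p x ≤ p + 2 :=
  (Finset.mem_Icc.mp (cmiss_mem p hpn h2 x).1).2

include hpn h2 in
lemma cmiss_uniq (x : Placement lam) {v : ℕ} (hv : v ∈ Finset.Icc 1 (p + 2))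
    (hnot : v ∉ lowSet p x) : v = cmiss p x := by
  have := cmiss_spec p hpn h2 x
  have : v ∈ ({cmiss p x} : Finset ℕ) := this ▸ Finset.mem_sdiff.mpr ⟨hv, hnot⟩
  exact Finset.mem_singleton.mp this

include hpn h2 in
lemma insert_cmiss (x : Placement lam) :
    insert (cmiss p x) (lowSet p x) = Finset.Icc 1 (p + 2) := by
  ext v
  rw [Finset.mem_insert]
  constructor
  · rintro (rfl | hv)
    · exact (cmiss_mem p hpn h2 x).1
    · exact lowSet_subset p hpn h2 x hv
  · intro hv
    by_cases hlv : v ∈ lowSet p x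
    · exact Or.inr hlv
    · exact Or.inl (cmiss_uniq p hpn h2 x hv hlv)

include hpn h2 in
lemma high_eq_cmiss (x : Placement lam) {i : ℕ} (hi : p + 1 ≤ i) (h1 : 1 ≤ ecol x.col i)
    (hle : ecol x.col i ≤ p + 2) : ecol x.col i = cmiss p x := by
  apply cmiss_uniq p hpn h2 x (Finset.mem_Icc.mpr ⟨h1, hle⟩)
  intro hmem
  obtain ⟨i', hi', he⟩ := Finset.mem_image.mp hmem
  have := ecol_injective x (by omega : 1 ≤ ecol x.col i) he.symm
  have := Finset.mem_range.mp hi'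
  omega

lemma fmap_pos {v : ℕ} (h : 1 ≤ v) : 1 ≤ fmap p v := by
  rw [fmap]; split_ifs <;> omega

lemma fmap_ge {v : ℕ} (h : 1 ≤ v) : p + 3 ≤ fmap p v := by
  rw [fmap]; split_ifs <;> omega

end Maps

section Maps2

variable (p : ℕ) {n : ℕ} {lam : Partition n} {lam' : Partition (n + 1)}
  (hpn : p + 1 ≤ n)
  (h2 : ∀ i, i ≤ p → epart lam i ≤ p + 2)
  (h3 : ∀ i, i ≤ p → epart lam' i = epart lam i)
  (h4 : epart lam' (p + 1) = p + 2)
  (h45 : ∀ i, i ≤ p + 1 → epart lam' i ≤ p + 2)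
  (h5 : ∀ i, p + 1 ≤ i → i < n → epart lam' (i + 1) = epart lam i + 1)

def fwd (x : Placement lam) : Placement lam' where
  col j := fwdCol p x j.val
  pos := by
    intro j
    simp only [fwdCol]
    split_ifs with hj1 hj2
    · exact ecol_pos x (by omega)
    · exact cmiss_pos p hpn h2 x
    · exact fmap_pos p (ecol_pos x (by have := j.isLt; omega))
  le_part := by
    intro j
    simp only [fwdCol]
    rw [← epart_val lam' j]
    split_ifs with hj1 hj2
    · rw [h3 j.val hj1]
      exact ecol_le_epart x (by omega)
    · rw [hj2, h4]
      exact cmiss_le p hpn h2 x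
    · have hj : p + 2 ≤ j.val := by omega
      have hjn : j.val - 1 < n := by have := j.isLt; omega
      have h5' := h5 (j.val - 1) (by omega) hjn
      rw [show j.val - 1 + 1 = j.val from by omega] at h5'
      rw [h5', fmap]
      have hst := epart_staircase lam hjn
      have hle := ecol_le_epart x hjn
      split_ifs <;> omega
  inj := by
    have key : ∀ a b : ℕ, a < n + 1 → b < n + 1 → fwdCol p x a = fwdCol p x b → a = b := by
      have hlow : ∀ a : ℕ, a ≤ p → 1 ≤ ecol x.col a ∧ ecol x.col a ≤ p + 2 := by
        intro a ha
        exact ⟨ecol_pos x (by omega), (ecol_le_epart x (by omega)).trans (h2 a ha)⟩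
      have hnotc : ∀ a : ℕ, a ≤ p → ecol x.col a ≠ cmiss p x := by
        intro a ha he
        exact (cmiss_mem p hpn h2 x).2 (he ▸ ecol_mem_lowSet p x ha)
      intro a b ha hb he
      simp only [fwdCol] at he
      split_ifs at he with ha1 hb1 hb2 ha2 hb1' hb2' hb1'' hb2''
      · exact ecol_injective x (ecol_pos x (by omega)) he
      · exact absurd he (hnotc a ha1)
      · have := fmap_ge p (ecol_pos x (show b - 1 < n by omega))
        have := (hlow a ha1).2
        omega
      · exact absurd he.symm (hnotc b hb1')
      · omega
      · have := fmap_ge p (ecol_pos x (show b - 1 < n by omega))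
        have := cmiss_le p hpn h2 x
        omega
      · have := fmap_ge p (ecol_pos x (show a - 1 < n by omega))
        have := (hlow b hb1'').2
        omega
      · have := fmap_ge p (ecol_pos x (show a - 1 < n by omega))
        have := cmiss_le p hpn h2 x
        omega
      · -- both high
        have han : a - 1 < n := by omega
        have hbn : b - 1 < n := by omega
        have hap : 1 ≤ ecol x.col (a - 1) := ecol_pos x han
        have hbp : 1 ≤ ecol x.col (b - 1) := ecol_pos x hbn
        rw [fmap, fmap] at he
        have hab : ecol x.col (a - 1) = ecol x.col (b - 1) := by
          split_ifs at he with q1 q2 q3 q4 q5 q6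
          · omega
          · -- a-1 val ≤ p+2, b-1 val ≤ p+2 : both equal cmiss
            rw [high_eq_cmiss p hpn h2 x (show p + 1 ≤ a - 1 by omega) hap (by omega),
              high_eq_cmiss p hpn h2 x (show p + 1 ≤ b - 1 by omega) hbp (by omega)]
          all_goals omega
        have := ecol_injective x hap hab
        omega
    intro a b he
    exact Fin.ext (key a.val b.val a.isLt b.isLt he)

include hpn h45 in
lemma fullLow (y : Placement lam') :
    (Finset.range (p + 2)).image (ecol y.col) = Finset.Icc 1 (p + 2) := by
  apply Finset.eq_of_subset_of_card_le
  · intro v hv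
    obtain ⟨i, hi, rfl⟩ := Finset.mem_image.mp hv
    have hip : i ≤ p + 1 := by have := Finset.mem_range.mp hi; omega
    have hin : i < n + 1 := by omega
    rw [Finset.mem_Icc]
    exact ⟨ecol_pos y hin, (ecol_le_epart y hin).trans (h45 i hip)⟩
  · rw [Finset.card_image_of_injOn, Finset.card_range, Nat.card_Icc]
    · omega
    · intro i hi i' hi' he
      exact ecol_injective y (ecol_pos y (by have := Finset.mem_range.mp hi; omega)) he

include hpn h45 in
lemma high_ge (y : Placement lam') {i : ℕ} (hi : p + 2 ≤ i) (h1 : 1 ≤ ecol y.col i) :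
    p + 3 ≤ ecol y.col i := by
  by_contra hc
  have hmem : ecol y.col i ∈ Finset.Icc 1 (p + 2) := Finset.mem_Icc.mpr ⟨h1, by omega⟩
  rw [← fullLow p hpn h45 y] at hmem
  obtain ⟨i', hi', he⟩ := Finset.mem_image.mp hmem
  have := ecol_injective y h1 he.symm
  have := Finset.mem_range.mp hi'
  omega

def bwd (y : Placement lam') : Placement lam where
  col j := bwdCol p y j.val
  pos := by
    intro j
    simp only [bwdCol]
    split_ifs with hj1 hj2
    · exact ecol_pos y (by omega)
    · exact ecol_pos y (by omega)
    · have := high_ge p hpn h45 y (show p + 2 ≤ j.val + 1 by omega)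
        (ecol_pos y (by have := j.isLt; omega))
      omega
  le_part := by
    intro j
    simp only [bwdCol]
    rw [← epart_val lam j]
    split_ifs with hj1 hj2
    · rw [← h3 j.val hj1]
      exact ecol_le_epart y (by omega)
    · have := (ecol_le_epart y (show p + 1 < n + 1 by omega)).trans (h45 (p + 1) le_rfl)
      have := epart_staircase lam j.isLt
      omega
    · have h5' := h5 j.val (by omega) j.isLt
      have := ecol_le_epart y (show j.val + 1 < n + 1 by have := j.isLt; omega)
      omega
  inj := by
    have hyP1 : 1 ≤ ecol y.col (p + 1) := ecol_pos y (by omega)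
    have hyP2 : ecol y.col (p + 1) ≤ p + 2 := by
      have := ecol_le_epart y (show p + 1 < n + 1 by omega)
      have := h45 (p + 1) le_rfl
      omega
    have key : ∀ a b : ℕ, a < n → b < n → bwdCol p y a = bwdCol p y b → a = b := by
      have hlow : ∀ a : ℕ, a ≤ p → 1 ≤ ecol y.col a ∧ ecol y.col a ≤ p + 2 := by
        intro a ha
        exact ⟨ecol_pos y (by omega), (ecol_le_epart y (by omega)).trans (h45 a (by omega))⟩
      intro a b ha hb he
      simp only [bwdCol] at he
      have hga : ∀ c : ℕ, c < n → ¬ c ≤ p → ecol y.col (c + 1) ≠ p + 3 →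
          p + 4 ≤ ecol y.col (c + 1) := by
        intro c hc hc1 hc2
        have := high_ge p hpn h45 y (show p + 2 ≤ c + 1 by omega) (ecol_pos y (by omega))
        omega
      split_ifs at he with ha1 hb1 hb2 ha2 hb1' hb2' hb1'' hb2''
      · exact ecol_injective y (ecol_pos y (show a < n + 1 by omega)) he
      · have := ecol_injective y (ecol_pos y (show a < n + 1 by omega)) he
        omega
      · have := hga b hb hb1 hb2
        have := (hlow a ha1).2
        omega
      · have := ecol_injective y hyP1 he
        omega
      · have heq : ecol y.col (a + 1) = ecol y.col (b + 1) := by rw [ha2, hb2']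
        have := ecol_injective y (show 1 ≤ ecol y.col (a + 1) by rw [ha2]; omega) heq
        omega
      · have := hga b hb hb1' hb2'
        omega
      · have := hga a ha ha1 ha2
        have := (hlow b hb1'').2
        omega
      · have := hga a ha ha1 ha2
        omega
      · have := hga a ha ha1 ha2
        have := hga b hb hb1'' hb2''
        have heq : ecol y.col (a + 1) = ecol y.col (b + 1) := by omega
        have := ecol_injective y (show 1 ≤ ecol y.col (a + 1) by omega) heq
        omega
    intro a b he
    exact Fin.ext (key a.val b.val a.isLt b.isLt he)

end Maps2

lemma ecol_val {m : ℕ} {lam : Partition m} (x : Placement lam) (j : Fin m) :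
    ecol x.col j.val = x.col j :=
  (ecol_lt x j.isLt).trans (congrArg x.col (Fin.eta j j.isLt))

section Maps3

variable (p : ℕ) {n : ℕ} {lam : Partition n} {lam' : Partition (n + 1)}
  (hpn : p + 1 ≤ n)
  (h2 : ∀ i, i ≤ p → epart lam i ≤ p + 2)
  (h3 : ∀ i, i ≤ p → epart lam' i = epart lam i)
  (h4 : epart lam' (p + 1) = p + 2)
  (h45 : ∀ i, i ≤ p + 1 → epart lam' i ≤ p + 2)
  (h5 : ∀ i, p + 1 ≤ i → i < n → epart lam' (i + 1) = epart lam i + 1)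

lemma fwd_lo (x : Placement lam) {i : ℕ} (hi : i ≤ p) :
    ecol (fwd p hpn h2 h3 h4 h5 x (lam' := lam')).col i = ecol x.col i := by
  rw [ecol_lt _ (show i < n + 1 by omega)]
  show fwdCol p x i = ecol x.col i
  simp only [fwdCol, if_pos hi]

lemma fwd_mid (x : Placement lam) :
    ecol (fwd p hpn h2 h3 h4 h5 x (lam' := lam')).col (p + 1) = cmiss p x := by
  rw [ecol_lt _ (show p + 1 < n + 1 by omega)]
  show fwdCol p x (p + 1) = cmiss p x
  simp only [fwdCol]
  rw [if_neg (show ¬ p + 1 ≤ p by omega)]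
  simp

lemma fwd_hi (x : Placement lam) {i : ℕ} (hi : p + 1 ≤ i) :
    ecol (fwd p hpn h2 h3 h4 h5 x (lam' := lam')).col (i + 1) = fmap p (ecol x.col i) := by
  by_cases hin : i < n
  · rw [ecol_lt _ (show i + 1 < n + 1 by omega)]
    show fwdCol p x (i + 1) = fmap p (ecol x.col i)
    simp only [fwdCol]
    rw [if_neg (by omega), if_neg (by omega)]
    congr 1
  · rw [ecol_ge _ (show ¬ i + 1 < n + 1 by omega), ecol_ge x hin]
    simp [fmap]

include hpn h2 in
lemma cntN_low (x : Placement lam) (t : ℕ) :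
    cntN (ecol x.col) (p + 1) t + (if cmiss p x ≤ t then 1 else 0) = min t (p + 2) := by
  have hinj : Set.InjOn (ecol x.col)
      ((Finset.range (p + 1)).filter (fun i => ecol x.col i ≤ t)) := by
    intro i hi i' hi' he
    have hi2 : i < p + 1 := by
      have := Finset.mem_filter.mp (Finset.mem_coe.mp hi)
      exact Finset.mem_range.mp this.1
    exact ecol_injective x (ecol_pos x (by omega)) he
  have step1 : cntN (ecol x.col) (p + 1) t = ((lowSet p x).filter (· ≤ t)).card := by
    rw [cntN, lowSet, Finset.filter_image, Finset.card_image_of_injOn hinj]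
    congr 1
    apply Finset.filter_congr
    intro i hi
    have hin : i < n := by have := Finset.mem_range.mp hi; omega
    have hp := ecol_pos x hin
    constructor
    · rintro ⟨_, hh⟩; exact hh
    · intro hh; exact ⟨hp, hh⟩
  have hins := insert_cmiss p hpn h2 x
  have hnot := (cmiss_mem p hpn h2 x).2
  have step2 : ((Finset.Icc 1 (p + 2)).filter (· ≤ t)).card
      = ((lowSet p x).filter (· ≤ t)).card + (if cmiss p x ≤ t then 1 else 0) := by
    rw [← hins, Finset.filter_insert]
    split_ifs with hct
    · rw [Finset.card_insert_of_notMem (fun hmem => hnot (Finset.mem_of_mem_filter _ hmem))]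
    · omega
  have step3 : ((Finset.Icc 1 (p + 2)).filter (· ≤ t)).card = min t (p + 2) := by
    have hset : (Finset.Icc 1 (p + 2)).filter (· ≤ t) = Finset.Icc 1 (min t (p + 2)) := by
      ext v
      simp only [Finset.mem_filter, Finset.mem_Icc]
      omega
    rw [hset, Nat.card_Icc]
    omega
  omega

include hpn h2 in
lemma cntD_le_one (x : Placement lam) (j : ℕ) : cntD p (ecol x.col) j (p + 2) ≤ 1 := by
  rw [cntD]
  apply Finset.card_le_one.mpr
  intro a ha b hb
  simp only [Finset.mem_filter, Finset.mem_Ico] at ha hb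
  have hca := high_eq_cmiss p hpn h2 x (show p + 1 ≤ a by omega) ha.2.1 ha.2.2
  have hcb := high_eq_cmiss p hpn h2 x (show p + 1 ≤ b by omega) hb.2.1 hb.2.2
  exact ecol_injective x ha.2.1 (hca.trans hcb.symm)

include h45 in
lemma bwd_lo (y : Placement lam') {i : ℕ} (hi : i ≤ p) :
    ecol (bwd p hpn h3 h4 h45 h5 y).col i = ecol y.col i := by
  rw [ecol_lt _ (show i < n by omega)]
  show bwdCol p y i = ecol y.col i
  simp only [bwdCol, if_pos hi]

include h45 in
lemma bwd_hi (y : Placement lam') {i : ℕ} (hi : p + 1 ≤ i) (hin : i < n) :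
    ecol (bwd p hpn h3 h4 h45 h5 y).col i
      = if ecol y.col (i + 1) = p + 3 then ecol y.col (p + 1) else ecol y.col (i + 1) - 1 := by
  rw [ecol_lt _ hin]
  show bwdCol p y i = _
  simp only [bwdCol]
  rw [if_neg (by omega)]

lemma bwd_fwd (x : Placement lam) :
    bwd p hpn h3 h4 h45 h5 (fwd p hpn h2 h3 h4 h5 x (lam' := lam')) = x := by
  apply Placement.ext_col
  funext j
  have hxe := ecol_val x j
  show bwdCol p (fwd p hpn h2 h3 h4 h5 x (lam' := lam')) j.val = x.col j
  simp only [bwdCol]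
  split_ifs with hj1 hj2
  · rw [fwd_lo p hpn h2 h3 h4 h5 x hj1, hxe]
  · rw [fwd_mid p hpn h2 h3 h4 h5 x]
    rw [fwd_hi p hpn h2 h3 h4 h5 x (show p + 1 ≤ j.val by omega)] at hj2
    have h1 : 1 ≤ ecol x.col j.val ∧ ecol x.col j.val ≤ p + 2 := by
      rw [fmap] at hj2
      have := ecol_pos x j.isLt
      split_ifs at hj2 <;> omega
    have he : ecol x.col j.val = cmiss p x :=
      high_eq_cmiss p hpn h2 x (by omega) h1.1 h1.2
    rw [← he, hxe]
  · rw [fwd_hi p hpn h2 h3 h4 h5 x (show p + 1 ≤ j.val by omega)] at hj2 ⊢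
    rw [← hxe]
    have h1 : 1 ≤ ecol x.col j.val := ecol_pos x j.isLt
    rw [fmap] at hj2 ⊢
    split_ifs at hj2 ⊢ <;> omega

lemma fwd_bwd (y : Placement lam') :
    fwd p hpn h2 h3 h4 h5 (bwd p hpn h3 h4 h45 h5 y) = y := by
  apply Placement.ext_col
  funext j
  have hye := ecol_val y j
  show fwdCol p (bwd p hpn h3 h4 h45 h5 y) j.val = y.col j
  simp only [fwdCol]
  split_ifs with hj1 hj2
  · rw [bwd_lo p hpn h3 h4 h45 h5 y hj1, hye]
  · -- j = p+1
    have hv : y.col j ∈ Finset.Icc 1 (p + 2) := by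
      rw [Finset.mem_Icc, ← hye, hj2]
      refine ⟨ecol_pos y (by omega), ?_⟩
      have := ecol_le_epart y (show p + 1 < n + 1 by omega)
      omega
    have hnot : y.col j ∉ lowSet p (bwd p hpn h3 h4 h45 h5 y) := by
      intro hmem
      obtain ⟨i, hi, he⟩ := Finset.mem_image.mp hmem
      have hip : i ≤ p := by have := Finset.mem_range.mp hi; omega
      rw [bwd_lo p hpn h3 h4 h45 h5 y hip, ← hye, hj2] at he
      have := ecol_injective y (ecol_pos y (show i < n + 1 by omega)) he
      omega
    exact (cmiss_uniq p hpn h2 _ hv hnot).symm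
  · -- j ≥ p+2
    have hj3 : p + 2 ≤ j.val := by omega
    have hjn : j.val - 1 < n := by have := j.isLt; omega
    rw [bwd_hi p hpn h3 h4 h45 h5 y (show p + 1 ≤ j.val - 1 by omega) hjn,
      show j.val - 1 + 1 = j.val from by omega]
    have hyp := ecol_pos y j.isLt
    have hyge := high_ge p hpn h45 y hj3 hyp
    by_cases hq : ecol y.col j.val = p + 3
    · rw [if_pos hq, fmap]
      have h1 : 1 ≤ ecol y.col (p + 1) := ecol_pos y (by omega)
      have hle : ecol y.col (p + 1) ≤ p + 2 := by
        have := ecol_le_epart y (show p + 1 < n + 1 by omega)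
        have := h45 (p + 1) le_rfl
        omega
      rw [if_neg (by omega), if_pos hle, ← hye, hq]
    · rw [if_neg hq, fmap, ← hye]
      split_ifs <;> omega

include h4 in
lemma rle_fwd_iff (x y : Placement lam) :
    rle x y ↔ rle (fwd p hpn h2 h3 h4 h5 x (lam' := lam')) (fwd p hpn h2 h3 h4 h5 y) := by
  rw [rle_iff_cnt, rle_iff_cnt]
  exact key_iff p (cmiss p x) (cmiss p y) (ecol x.col) (ecol y.col)
    (ecol (fwd p hpn h2 h3 h4 h5 x (lam' := lam')).col)
    (ecol (fwd p hpn h2 h3 h4 h5 y (lam' := lam')).col)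
    (cmiss_pos p hpn h2 x) (cmiss_le p hpn h2 x) (cmiss_pos p hpn h2 y) (cmiss_le p hpn h2 y)
    (cntN_low p hpn h2 x) (cntN_low p hpn h2 y)
    (fun i hi ha hb => high_eq_cmiss p hpn h2 x hi ha hb)
    (fun i hi ha hb => high_eq_cmiss p hpn h2 y hi ha hb)
    (cntD_le_one p hpn h2 y)
    (fun i hi => fwd_lo p hpn h2 h3 h4 h5 x hi) (fwd_mid p hpn h2 h3 h4 h5 x)
    (fun i hi => fwd_hi p hpn h2 h3 h4 h5 x hi)
    (fun i hi => fwd_lo p hpn h2 h3 h4 h5 y hi) (fwd_mid p hpn h2 h3 h4 h5 y)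
    (fun i hi => fwd_hi p hpn h2 h3 h4 h5 y hi)

end Maps3

lemma gjw_length {m : ℕ} (lam : Partition m) : lam.gjw.length = m := by
  simp [Partition.gjw]

lemma epart_eq_gjw {m : ℕ} (lam : Partition m) (i : ℕ) (hi : i < m) :
    epart lam i = lam.gjw.getD i 0 + (i + 1) := by
  have hlen : i < lam.gjw.length := by rw [gjw_length]; exact hi
  rw [epart, dif_pos hi, List.getD_eq_getElem lam.gjw 0 hlen]
  simp only [Partition.gjw, List.getElem_map, List.getElem_finRange, Fin.cast_mk]
  have := lam.staircase ⟨i, hi⟩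
  simp only [Fin.val_mk] at this ⊢
  omega

lemma getD_concat (u v : List ℕ) (i : ℕ) :
    ((u ++ v).getD i 0) = if i < u.length then u.getD i 0 else v.getD (i - u.length) 0 := by
  split_ifs with hi
  · exact List.getD_append u v 0 i hi
  · exact List.getD_append_right u v 0 i (by omega)


/-- If the GJW sequence of `λ` is `g¹ ++ (1) ++ g²` and that of `λ'` is
`g¹ ++ (1, 0) ++ g²`, then the rook posets of `λ` and `λ'` are isomorphic. -/
theorem rookIso_insert_zero_after_one {n n' : ℕ} (lam : Partition n) (lam' : Partition n')
    (g1 g2 : List ℕ) (h : lam.gjw = g1 ++ [1] ++ g2) (h' : lam'.gjw = g1 ++ [1, 0] ++ g2) :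
    RookIso lam lam' := by
  have hlen : n = g1.length + 1 + g2.length := by
    have h0 := gjw_length lam
    rw [h] at h0
    simp at h0
    omega
  have hlen' : n' = g1.length + 2 + g2.length := by
    have h0 := gjw_length lam'
    rw [h'] at h0
    simp at h0
    omega
  obtain rfl : n' = n + 1 := by omega
  have hpn : g1.length + 1 ≤ n := by omega
  have e_lam : ∀ i, i < n → epart lam i = (g1 ++ [1] ++ g2).getD i 0 + (i + 1) := by
    intro i hi
    rw [epart_eq_gjw lam i hi, h]
  have e_lam' : ∀ i, i < n + 1 → epart lam' i = (g1 ++ [1, 0] ++ g2).getD i 0 + (i + 1) := by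
    intro i hi
    rw [epart_eq_gjw lam' i hi, h']
  have len1 : (g1 ++ [1]).length = g1.length + 1 := by simp
  have len2 : (g1 ++ [1, 0]).length = g1.length + 2 := by simp
  have hA : ∀ i, i ≤ g1.length → (g1 ++ [1] ++ g2).getD i 0 = (g1 ++ [1, 0] ++ g2).getD i 0 := by
    intro i hi
    rw [getD_concat (g1 ++ [1]) g2, getD_concat (g1 ++ [1, 0]) g2, len1, len2,
      if_pos (show i < g1.length + 1 by omega), if_pos (show i < g1.length + 2 by omega),
      getD_concat g1 [1], getD_concat g1 [1, 0]]
    by_cases hip : i < g1.length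
    · rw [if_pos hip, if_pos hip]
    · rw [if_neg hip, if_neg hip, show i - g1.length = 0 by omega]
      rfl
  have hB : (g1 ++ [1, 0] ++ g2).getD (g1.length + 1) 0 = 0 := by
    rw [getD_concat (g1 ++ [1, 0]) g2, len2, if_pos (by omega),
      getD_concat g1 [1, 0], if_neg (by omega), show g1.length + 1 - g1.length = 1 by omega]
    rfl
  have hC : ∀ i, g1.length + 1 ≤ i →
      (g1 ++ [1, 0] ++ g2).getD (i + 1) 0 = (g1 ++ [1] ++ g2).getD i 0 := by
    intro i hi
    rw [getD_concat (g1 ++ [1, 0]) g2, getD_concat (g1 ++ [1]) g2, len1, len2,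
      if_neg (show ¬ i + 1 < g1.length + 2 by omega), if_neg (show ¬ i < g1.length + 1 by omega),
      show i + 1 - (g1.length + 2) = i - (g1.length + 1) by omega]
  have h3 : ∀ i, i ≤ g1.length → epart lam' i = epart lam i := by
    intro i hi
    rw [e_lam' i (by omega), e_lam i (by omega), hA i hi]
  have h4 : epart lam' (g1.length + 1) = g1.length + 2 := by
    rw [e_lam' (g1.length + 1) (by omega), hB]
    omega
  have h45 : ∀ i, i ≤ g1.length + 1 → epart lam' i ≤ g1.length + 2 := by
    intro i hi
    have hii : i < n + 1 := by omega
    have hp1 : g1.length + 1 < n + 1 := by omega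
    have e1 : epart lam' i = lam'.part ⟨i, hii⟩ := dif_pos hii
    have e2 : epart lam' (g1.length + 1) = lam'.part ⟨g1.length + 1, hp1⟩ := dif_pos hp1
    have hmono := lam'.mono (show (⟨i, hii⟩ : Fin (n + 1)) ≤ ⟨g1.length + 1, hp1⟩ from hi)
    omega
  have h5 : ∀ i, g1.length + 1 ≤ i → i < n → epart lam' (i + 1) = epart lam i + 1 := by
    intro i hi hin
    rw [e_lam' (i + 1) (by omega), e_lam i (by omega), hC i hi]
    omega
  have h2 : ∀ i, i ≤ g1.length → epart lam i ≤ g1.length + 2 := by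
    intro i hi
    rw [← h3 i hi]
    exact h45 i (by omega)
  exact ⟨⟨fwd g1.length hpn h2 h3 h4 h5, bwd g1.length hpn h3 h4 h45 h5,
    fun x => bwd_fwd g1.length hpn h2 h3 h4 h45 h5 x,
    fun y => fwd_bwd g1.length hpn h2 h3 h4 h45 h5 y⟩,
    fun a b => rle_fwd_iff g1.length hpn h2 h3 h4 h5 a b⟩



end RookPoset
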